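/- Under the setting of independent empirical p-values (each null test point distributed as P0, each p̂_i computed from its own independent calibration set of n i.i.d. P0 points, atomless score distribution), let α ∈ (0,1], let ℓ ≥ 1 be any integer and take the calibration set cardinality n = ⌈ℓm/α⌉ − 1. Then the FDR of the BH procedure at level α applied to (p̂_1,…,p̂_m) satisfies the two-sided bound (n/(n+1))·(m0·α/m) ≤ FDR ≤ m0·α/m. -/

import Mathlib

open MeasureTheory ProbabilityTheory Finset
open scoped Classical ENNReal

/-- Hypothesis `i` is rejected by the Benjamini–Hochberg procedure at level `α`. -/
def bhRejects (m : ℕ) (α : ℝ) (p : Fin m → ℝ) (i : Fin m) : Prop :=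
  ∃ k ∈ Finset.Icc 1 m,
    p i ≤ α * k / m ∧
      k ≤ (Finset.univ.filter fun j => p j ≤ α * (k : ℝ) / m).card

/-- Number of rejections of the BH procedure at level `α`. -/
noncomputable def bhR (m : ℕ) (α : ℝ) (p : Fin m → ℝ) : ℕ :=
  (Finset.univ.filter fun i => bhRejects m α p i).card

/-- Number of false positives (rejected null hypotheses) of BH at level `α`. -/
noncomputable def bhFP (m : ℕ) (α : ℝ) (H0 : Finset (Fin m)) (p : Fin m → ℝ) : ℕ :=
  (H0.filter fun i => bhRejects m α p i).card

/-- False discovery proportion of BH at level `α` (with the convention 0/0 = 0). -/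
noncomputable def bhFDP (m : ℕ) (α : ℝ) (H0 : Finset (Fin m)) (p : Fin m → ℝ) : ℝ :=
  (bhFP m α H0 p : ℝ) / (bhR m α p : ℝ)

/-- Empirical p-value of a point `x` with respect to the calibration set `z`. -/
noncomputable def empPval {𝒳 : Type*} (n : ℕ) (a : 𝒳 → ℝ) (x : 𝒳) (z : Fin n → 𝒳) : ℝ :=
  (1 / (n : ℝ)) * ∑ u : Fin n, if a x ≤ a (z u) then (1 : ℝ) else 0

section PartA

variable (m : ℕ) (α : ℝ)

/-- number of p-values at most t -/
noncomputable def bhN (p : Fin m → ℝ) (t : ℝ) : ℕ :=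
  (Finset.univ.filter fun j => p j ≤ t).card

/-- candidate set for the BH max -/
noncomputable def bhK (p : Fin m → ℝ) : Finset ℕ :=
  (Finset.Icc 0 m).filter fun k => k ≤ bhN m p (α * k / m)

lemma bhK_nonempty (p : Fin m → ℝ) : (bhK m α p).Nonempty :=
  ⟨0, by simp [bhK]⟩

/-- the BH max -/
noncomputable def bhM (p : Fin m → ℝ) : ℕ :=
  (bhK m α p).max' (bhK_nonempty m α p)

lemma bhM_mem (p : Fin m → ℝ) : bhM m α p ∈ bhK m α p :=
  (bhK m α p).max'_mem _

lemma bhM_le (p : Fin m → ℝ) : bhM m α p ≤ m := by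
  have := bhM_mem m α p
  simp only [bhK, Finset.mem_filter, Finset.mem_Icc] at this
  exact this.1.2

lemma le_bhM {p : Fin m → ℝ} {k : ℕ} (hk : k ∈ bhK m α p) : k ≤ bhM m α p :=
  (bhK m α p).le_max' _ hk

lemma bhN_mono (p : Fin m → ℝ) {s t : ℝ} (hst : s ≤ t) : bhN m p s ≤ bhN m p t := by
  apply Finset.card_le_card
  intro j hj
  simp only [Finset.mem_filter] at *
  exact ⟨hj.1, hj.2.trans hst⟩

lemma bhN_le (p : Fin m → ℝ) (t : ℝ) : bhN m p t ≤ m := by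
  classical
  calc bhN m p t ≤ Finset.univ.card := Finset.card_filter_le _ _
  _ = m := by simp

variable (hm : 0 < m) (hα : 0 < α)

lemma bhM_spec (p : Fin m → ℝ) : bhM m α p ≤ bhN m p (α * bhM m α p / m) := by
  have := bhM_mem m α p
  simp only [bhK, Finset.mem_filter] at this
  exact this.2

include hm hα in
lemma rejects_iff (p : Fin m → ℝ) (i : Fin m) :
    bhRejects m α p i ↔ 1 ≤ bhM m α p ∧ p i ≤ α * bhM m α p / m := by
  constructor
  · rintro ⟨k, hk, hpi, hN⟩
    simp only [Finset.mem_Icc] at hk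
    have hkK : k ∈ bhK m α p := by
      simp only [bhK, Finset.mem_filter, Finset.mem_Icc]
      exact ⟨⟨Nat.zero_le _, hk.2⟩, hN⟩
    have hkM : k ≤ bhM m α p := le_bhM m α hkK
    refine ⟨le_trans hk.1 hkM, le_trans hpi ?_⟩
    gcongr
  · rintro ⟨h1, h2⟩
    exact ⟨bhM m α p, by simp only [Finset.mem_Icc]; exact ⟨h1, bhM_le m α p⟩,
      h2, bhM_spec m α p⟩

include hm hα in
lemma bhN_bhM (p : Fin m → ℝ) : bhN m p (α * bhM m α p / m) = bhM m α p := by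
  set R := bhM m α p with hR
  set R' := bhN m p (α * R / m) with hR'
  have h1 : R ≤ R' := bhM_spec m α p
  have h2 : R' ≤ R := by
    apply le_bhM m α
    simp only [bhK, Finset.mem_filter, Finset.mem_Icc]
    refine ⟨⟨Nat.zero_le _, bhN_le m p _⟩, ?_⟩
    rw [hR']
    apply bhN_mono
    gcongr
  omega

include hm hα in
lemma bhR_eq_bhM (p : Fin m → ℝ) : bhR m α p = bhM m α p := by
  rcases Nat.eq_zero_or_pos (bhM m α p) with h0 | h1
  · rw [h0]
    simp only [bhR, Finset.card_eq_zero, Finset.filter_eq_empty_iff]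
    intro i _
    rw [rejects_iff m α hm hα]
    omega
  · have : (Finset.univ.filter fun i => bhRejects m α p i)
        = Finset.univ.filter fun i => p i ≤ α * bhM m α p / m := by
      apply Finset.filter_congr
      intro i _
      rw [rejects_iff m α hm hα, and_iff_right (Nat.one_le_iff_ne_zero.mpr (Nat.pos_iff_ne_zero.mp h1))]
    rw [bhR, this]
    exact bhN_bhM m α hm hα p

lemma bhM_antitone {p q : Fin m → ℝ} (hpq : ∀ j, p j ≤ q j) :
    bhM m α q ≤ bhM m α p := by
  apply le_bhM m α
  have := bhM_mem m α q
  simp only [bhK, Finset.mem_filter, Finset.mem_Icc] at this ⊢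
  refine ⟨this.1, le_trans this.2 ?_⟩
  apply Finset.card_le_card
  intro j hj
  simp only [Finset.mem_filter] at *
  exact ⟨hj.1, le_trans (hpq j) hj.2⟩

end PartA

section PartA2

variable {m : ℕ} {α : ℝ} (hm : 0 < m) (hα : 0 < α)

include hm hα in
lemma one_le_bhM_update (p : Fin m → ℝ) (i : Fin m) :
    1 ≤ bhM m α (Function.update p i 0) := by
  apply le_bhM m α
  simp only [bhK, Finset.mem_filter, Finset.mem_Icc]
  refine ⟨⟨Nat.zero_le _, hm⟩, ?_⟩
  rw [bhN]
  apply Finset.card_pos.mpr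
  refine ⟨i, ?_⟩
  simp only [Finset.mem_filter, Finset.mem_univ, true_and, Function.update_self]
  positivity

include hm hα in
lemma bhM_update_eq (p : Fin m → ℝ) (i : Fin m) (hpi : 0 ≤ p i)
    (h : p i ≤ α * (bhM m α (Function.update p i 0)) / m) :
    bhM m α p = bhM m α (Function.update p i 0) := by
  set p' := Function.update p i 0 with hp'
  have hle : ∀ j, p' j ≤ p j := by
    intro j
    rcases eq_or_ne j i with rfl | hji
    · simp [hp', hpi]
    · simp [hp', Function.update_of_ne hji]
  refine le_antisymm (bhM_antitone m α hle) ?_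
  apply le_bhM m α
  simp only [bhK, Finset.mem_filter, Finset.mem_Icc]
  refine ⟨⟨Nat.zero_le _, bhM_le m α p'⟩, ?_⟩
  have hsets : (Finset.univ.filter fun j => p j ≤ α * (bhM m α p') / m)
      = Finset.univ.filter fun j => p' j ≤ α * (bhM m α p') / m := by
    apply Finset.filter_congr
    intro j _
    rcases eq_or_ne j i with rfl | hji
    · simp only [hp', Function.update_self]
      constructor
      · intro _; positivity
      · intro _; exact h
    · simp [hp', Function.update_of_ne hji]
  have hNN : bhN m p (α * (bhM m α p') / m) = bhN m p' (α * (bhM m α p') / m) := by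
    simp only [bhN]; rw [hsets]
  rw [hNN]
  exact bhM_spec m α p'

include hm hα in
lemma event_identity (p : Fin m → ℝ) (i : Fin m) (hpi : 0 ≤ p i) (k : ℕ)
    (hk : k ∈ Finset.Icc 1 m) :
    (bhRejects m α p i ∧ bhR m α p = k) ↔
      (p i ≤ α * k / m ∧ bhR m α (Function.update p i 0) = k) := by
  rw [bhR_eq_bhM m α hm hα, bhR_eq_bhM m α hm hα]
  set p' := Function.update p i 0 with hp'
  have hle : ∀ j, p' j ≤ p j := by
    intro j
    rcases eq_or_ne j i with rfl | hji
    · simp [hp', hpi]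
    · simp [hp', Function.update_of_ne hji]
  constructor
  · rintro ⟨hrej, hRk⟩
    rw [rejects_iff m α hm hα] at hrej
    have h' : p i ≤ α * (bhM m α p') / m := by
      refine le_trans hrej.2 ?_
      gcongr
      · exact_mod_cast bhM_antitone m α hle
    rw [← bhM_update_eq hm hα p i hpi h', hRk]
    exact ⟨by rw [← hRk]; exact hrej.2, rfl⟩
  · rintro ⟨hpik, hR'k⟩
    have h' : p i ≤ α * (bhM m α p') / m := by rw [hR'k]; exact hpik
    have heq := bhM_update_eq hm hα p i hpi h'
    rw [heq, hR'k]
    refine ⟨?_, rfl⟩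
    rw [rejects_iff m α hm hα, heq, hR'k]
    simp only [Finset.mem_Icc] at hk
    exact ⟨hk.1, hpik⟩

include hm hα in
lemma fdp_decomp (p : Fin m → ℝ) (H0 : Finset (Fin m)) (hp : ∀ i, 0 ≤ p i) :
    bhFDP m α H0 p = ∑ i ∈ H0, ∑ k ∈ Finset.Icc 1 m,
      (if (p i ≤ α * k / m ∧ bhR m α (Function.update p i 0) = k)
        then ((k : ℝ))⁻¹ else 0) := by
  have step1 : bhFDP m α H0 p
      = ∑ i ∈ H0, (if bhRejects m α p i then (1:ℝ) else 0) / (bhR m α p : ℝ) := by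
    rw [bhFDP, bhFP, Finset.card_filter, ← Finset.sum_div]
    push_cast
    rfl
  rw [step1]
  apply Finset.sum_congr rfl
  intro i hi
  have step2 : (if bhRejects m α p i then (1:ℝ) else 0) / (bhR m α p : ℝ)
      = ∑ k ∈ Finset.Icc 1 m,
        (if (bhRejects m α p i ∧ bhR m α p = k) then ((k : ℝ))⁻¹ else 0) := by
    by_cases hrej : bhRejects m α p i
    · have hR1 : 1 ≤ bhR m α p := by
        rw [bhR_eq_bhM m α hm hα]
        exact ((rejects_iff m α hm hα p i).mp hrej).1
      have hRm : bhR m α p ≤ m := by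
        rw [bhR_eq_bhM m α hm hα]; exact bhM_le m α p
      have hmem : bhR m α p ∈ Finset.Icc 1 m := by
        simp only [Finset.mem_Icc]; exact ⟨hR1, hRm⟩
      calc (if bhRejects m α p i then (1:ℝ) else 0) / (bhR m α p : ℝ)
          = ((bhR m α p : ℝ))⁻¹ := by rw [if_pos hrej, one_div]
        _ = ∑ k ∈ Finset.Icc 1 m, (if bhR m α p = k then ((k:ℝ))⁻¹ else 0) := by
            rw [Finset.sum_ite_eq, if_pos hmem]
        _ = ∑ k ∈ Finset.Icc 1 m,
              (if (bhRejects m α p i ∧ bhR m α p = k) then ((k:ℝ))⁻¹ else 0) :=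
            Finset.sum_congr rfl (fun k _ => by simp [hrej])
    · simp [hrej]
  rw [step2]
  exact Finset.sum_congr rfl fun k hk =>
    if_congr (event_identity hm hα p i (hp i) k hk) rfl rfl

end PartA2

section PartB

variable {m : ℕ} {α : ℝ}

lemma measurable_count (c : ℝ) :
    Measurable (fun p : Fin m → ℝ => (Finset.univ.filter fun j => p j ≤ c).card) := by
  have : (fun p : Fin m → ℝ => (Finset.univ.filter fun j => p j ≤ c).card)
      = fun p => ∑ j : Fin m, if p j ≤ c then 1 else 0 := by
    funext p; rw [Finset.card_filter]
  rw [this]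
  apply Finset.measurable_sum
  intro j _
  apply Measurable.ite ?_ measurable_const measurable_const
  exact measurableSet_le (measurable_pi_apply j) measurable_const

lemma measurableSet_bhRejects (i : Fin m) :
    MeasurableSet {p : Fin m → ℝ | bhRejects m α p i} := by
  have : {p : Fin m → ℝ | bhRejects m α p i}
      = ⋃ k ∈ Finset.Icc 1 m, ({p : Fin m → ℝ | p i ≤ α * k / m}
          ∩ {p : Fin m → ℝ |
              k ≤ (Finset.univ.filter fun j => p j ≤ α * (k : ℝ) / m).card}) := by
    ext p
    simp only [Set.mem_setOf_eq, Set.mem_iUnion, Set.mem_inter_iff, bhRejects]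
    tauto
  rw [this]
  apply MeasurableSet.biUnion (Finset.Icc 1 m).countable_toSet
  intro k _
  refine MeasurableSet.inter ?_ ?_
  · exact measurableSet_le (measurable_pi_apply i) measurable_const
  · exact measurable_count (α * (k:ℝ) / m) (measurableSet_Ici (a := k))

lemma measurable_bhR : Measurable (fun p : Fin m → ℝ => bhR m α p) := by
  have : (fun p : Fin m → ℝ => bhR m α p)
      = fun p => ∑ i : Fin m, if bhRejects m α p i then 1 else 0 := by
    funext p; rw [bhR, Finset.card_filter]
  rw [this]
  apply Finset.measurable_sum
  intro i _
  exact Measurable.ite (measurableSet_bhRejects i) measurable_const measurable_const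

end PartB


section Helpers

variable {Ω ι κ β : Type*} [MeasurableSpace Ω] [MeasurableSpace β]
  {μ : Measure Ω}

lemma iIndepFun_reindex {f : ι → Ω → β}
    (h : iIndepFun f μ) (e : κ → ι)
    (he : Function.Injective e) :
    iIndepFun (fun k => f (e k)) μ := by
  rw [iIndepFun_iff_measure_inter_preimage_eq_mul]
  intro S sets hsets
  classical
  set sets' : ι → Set β := fun i =>
    ⋂ k ∈ S.filter (fun k => e k = i), sets k with hsets'
  have hfilter : ∀ k ∈ S, S.filter (fun k' => e k' = e k) = {k} := by
    intro k hk
    ext k'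
    simp only [Finset.mem_filter, Finset.mem_singleton]
    constructor
    · rintro ⟨_, h2⟩; exact he h2
    · rintro rfl; exact ⟨hk, rfl⟩
  have hsets'e : ∀ k ∈ S, sets' (e k) = sets k := by
    intro k hk
    have h0 : sets' (e k) = ⋂ k' ∈ S.filter (fun k' => e k' = e k), sets k' := rfl
    rw [h0, hfilter k hk]
    simp
  have hmeas' : ∀ i ∈ S.image e, MeasurableSet (sets' i) := by
    intro i hi
    apply MeasurableSet.biInter (Finset.countable_toSet _)
    intro k hk
    simp only [Finset.coe_filter, Set.mem_setOf_eq] at hk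
    exact hsets k hk.1
  have key := h.measure_inter_preimage_eq_mul (S.image e) hmeas'
  have hL : (⋂ i ∈ S.image e, f i ⁻¹' sets' i)
      = ⋂ k ∈ S, (fun ω => f (e k) ω) ⁻¹' sets k := by
    rw [Finset.set_biInter_finset_image]
    exact Set.iInter₂_congr fun k hk => by rw [hsets'e k hk]
  have hR : (∏ i ∈ S.image e, μ (f i ⁻¹' sets' i))
      = ∏ k ∈ S, μ ((fun ω => f (e k) ω) ⁻¹' sets k) := by
    rw [Finset.prod_image (fun a _ b _ hab => he hab)]
    exact Finset.prod_congr rfl fun k hk => by rw [hsets'e k hk]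
  rw [← hL, ← hR]
  exact key

lemma map_fun_eq_pi [Fintype κ] {f : κ → Ω → β} [IsProbabilityMeasure μ]
    (hmeas : ∀ k, Measurable (f k))
    (h : iIndepFun f μ) :
    μ.map (fun ω (k : κ) => f k ω) = Measure.pi (fun k => μ.map (f k)) := by
  have : ∀ k, IsProbabilityMeasure (μ.map (f k)) :=
    fun k => Measure.isProbabilityMeasure_map (hmeas k).aemeasurable
  refine (Measure.pi_eq (μ := fun k => μ.map (f k)) fun s hs => ?_).symm
  rw [Measure.map_apply (measurable_pi_lambda _ fun k => hmeas k)
    (MeasurableSet.univ_pi hs)]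
  have hpre : ((fun ω (k : κ) => f k ω) ⁻¹' Set.pi Set.univ s)
      = ⋂ k, f k ⁻¹' s k := by
    ext ω; simp [Set.mem_pi]
  rw [hpre]
  have := h.meas_iInter (s := fun k => f k ⁻¹' s k)
    (fun k => ⟨s k, hs k, rfl⟩)
  rw [this]
  exact Finset.prod_congr rfl fun k _ =>
    (Measure.map_apply (hmeas k) (hs k)).symm

lemma measure_eq_zero_of_indep_atomless {f g : Ω → ℝ} {ν : Measure ℝ}
    [IsProbabilityMeasure μ]
    (hf : Measurable f) (hg : Measurable g)
    (hind : IndepFun f g μ) (hfl : μ.map f = ν) (hgl : μ.map g = ν)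
    (hatom : ∀ r : ℝ, ν {r} = 0) :
    μ {ω | f ω = g ω} = 0 := by
  have hmap : μ.map (fun ω => (f ω, g ω)) = ν.prod ν := by
    rw [(indepFun_iff_map_prod_eq_prod_map_map hf.aemeasurable hg.aemeasurable).mp hind,
      hfl, hgl]
  have hdiag : MeasurableSet {p : ℝ × ℝ | p.1 = p.2} :=
    measurableSet_eq_fun measurable_fst measurable_snd
  have : μ {ω | f ω = g ω}
      = (μ.map (fun ω => (f ω, g ω))) {p : ℝ × ℝ | p.1 = p.2} := by
    rw [Measure.map_apply (hf.prodMk hg) hdiag]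
    rfl
  rw [this, hmap]
  have : IsProbabilityMeasure ν := by
    rw [← hfl]; exact Measure.isProbabilityMeasure_map hf.aemeasurable
  rw [Measure.prod_apply hdiag]
  have : ∀ x : ℝ, ν (Prod.mk x ⁻¹' {p : ℝ × ℝ | p.1 = p.2}) = 0 := by
    intro x
    have : (Prod.mk x ⁻¹' {p : ℝ × ℝ | p.1 = p.2}) = {y | x = y} := rfl
    rw [this]
    have : {y : ℝ | x = y} = {x} := by ext y; simp [eq_comm]
    rw [this]
    exact hatom x
  calc ∫⁻ x, ν (Prod.mk x ⁻¹' {p : ℝ × ℝ | p.1 = p.2}) ∂ν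
      = ∫⁻ _, 0 ∂ν := lintegral_congr this
    _ = 0 := lintegral_zero

end Helpers

section Rank

/-- rank of coordinate `v` in the vector `w` -/
noncomputable def rnk {n : ℕ} (v : Fin n) (w : Fin n → ℝ) : ℕ :=
  (Finset.univ.filter fun t => w t < w v).card

lemma measurable_rnk {n : ℕ} (v : Fin n) : Measurable (rnk v) := by
  have : rnk v = fun w : Fin n → ℝ => ∑ t : Fin n, if w t < w v then 1 else 0 := by
    funext w; rw [rnk, Finset.card_filter]
  rw [this]
  apply Finset.measurable_sum
  intro t _
  exact Measurable.ite (measurableSet_lt (measurable_pi_apply t) (measurable_pi_apply v))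
    measurable_const measurable_const

lemma rnk_le {n : ℕ} (v : Fin (n+1)) (w : Fin (n+1) → ℝ) : rnk v w ≤ n := by
  have h : (Finset.univ.filter fun t => w t < w v) ⊆ Finset.univ.erase v := by
    intro t ht
    simp only [Finset.mem_filter] at ht
    apply Finset.mem_erase.mpr
    exact ⟨fun h => absurd (h ▸ ht.2) (lt_irrefl _), Finset.mem_univ t⟩
  calc rnk v w ≤ (Finset.univ.erase v).card := Finset.card_le_card h
  _ = n := by rw [Finset.card_erase_of_mem (Finset.mem_univ v)]; simp

lemma rnk_strictMono {n : ℕ} {u v : Fin n} {w : Fin n → ℝ} (h : w u < w v) :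
    rnk u w < rnk v w := by
  apply Finset.card_lt_card
  rw [Finset.ssubset_iff_of_subset]
  · exact ⟨u, by simp [h], by simp⟩
  · intro t ht
    simp only [Finset.mem_filter, Finset.mem_univ, true_and] at *
    exact ht.trans h

lemma rnk_injective {n : ℕ} {w : Fin n → ℝ} (hw : Function.Injective w) :
    Function.Injective (fun v => rnk v w) := by
  intro u v huv
  by_contra hne
  rcases lt_trichotomy (w u) (w v) with h | h | h
  · exact absurd huv (Nat.ne_of_lt (rnk_strictMono h))
  · exact hne (hw h)
  · exact absurd huv.symm (Nat.ne_of_lt (rnk_strictMono h))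

lemma rnk_exists_unique {n : ℕ} {w : Fin (n+1) → ℝ} (hw : Function.Injective w)
    (s : ℕ) (hs : s ≤ n) : ∃! v : Fin (n+1), rnk v w = s := by
  have hbij : Function.Bijective (fun v : Fin (n+1) => (⟨rnk v w,
      Nat.lt_succ_of_le (rnk_le v w)⟩ : Fin (n+1))) := by
    apply Finite.injective_iff_bijective.mp
    intro u v huv
    apply rnk_injective hw
    simpa [Fin.mk.injEq] using huv
  obtain ⟨v, hv⟩ := hbij.2 ⟨s, Nat.lt_succ_of_le hs⟩
  refine ⟨v, by simpa [Fin.mk.injEq] using hv, fun v' hv' => ?_⟩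
  apply rnk_injective hw
  simp only
  rw [hv']
  exact (by simpa [Fin.mk.injEq] using hv : rnk v w = s).symm

lemma rnk_comp_perm {n : ℕ} (σ : Equiv.Perm (Fin n)) (w : Fin n → ℝ) (v : Fin n) :
    rnk (σ.symm v) (w ∘ σ) = rnk v w := by
  simp only [rnk]
  apply Finset.card_nbij' (i := fun t => σ t) (j := fun t => σ.symm t)
  · intro t ht
    simp only [Finset.mem_coe, Finset.mem_filter, Finset.mem_univ, true_and,
      Function.comp_apply, Equiv.apply_symm_apply] at *
    exact ht
  · intro t ht
    simp only [Finset.mem_coe, Finset.mem_filter, Finset.mem_univ, true_and,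
      Function.comp_apply, Equiv.apply_symm_apply] at *
    simpa [Equiv.apply_symm_apply] using ht
  · intro t _; simp
  · intro t _; simp

end Rank

section RankUniform

variable {Ω : Type*} [MeasurableSpace Ω] {μ : Measure Ω} [IsProbabilityMeasure μ]

lemma rank_uniform (n : ℕ) (W : Fin (n+1) → Ω → ℝ)
    (hWmeas : ∀ t, Measurable (W t))
    (hW : iIndepFun W μ) (ν : Measure ℝ)
    (hlaw : ∀ t, μ.map (W t) = ν) (hatom : ∀ r : ℝ, ν {r} = 0)
    (s : ℕ) (hs : s ≤ n) :
    μ {ω | rnk 0 (fun t => W t ω) = s} = ((n : ℝ≥0∞) + 1)⁻¹ := by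
  set vec : Ω → (Fin (n+1) → ℝ) := fun ω t => W t ω with hvec
  have hvecmeas : Measurable vec := measurable_pi_lambda _ hWmeas
  have hpi : μ.map vec = Measure.pi (fun _ : Fin (n+1) => ν) := by
    rw [map_fun_eq_pi hWmeas hW]
    congr 1
    exact funext hlaw
  -- permutation invariance of the joint law
  have hperm : ∀ σ : Equiv.Perm (Fin (n+1)),
      μ.map (fun ω t => W (σ t) ω) = μ.map vec := by
    intro σ
    rw [map_fun_eq_pi (fun t => hWmeas (σ t)) (iIndepFun_reindex hW σ σ.injective), hpi]
    congr 1
    exact funext fun t => hlaw (σ t)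
  -- all ranks have the same distribution
  have hsame : ∀ v : Fin (n+1),
      μ {ω | rnk v (vec ω) = s} = μ {ω | rnk 0 (vec ω) = s} := by
    intro v
    set σ : Equiv.Perm (Fin (n+1)) := Equiv.swap 0 v with hσ
    have hσ0 : σ 0 = v := Equiv.swap_apply_left 0 v
    have hcomp : Measurable (fun w : Fin (n+1) → ℝ => w ∘ σ) :=
      measurable_pi_lambda _ fun t => measurable_pi_apply (σ t)
    have hA : MeasurableSet {w : Fin (n+1) → ℝ | rnk 0 w = s} :=
      measurable_rnk 0 (MeasurableSet.singleton s)
    have hAv : MeasurableSet {w : Fin (n+1) → ℝ | rnk v w = s} :=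
      measurable_rnk v (MeasurableSet.singleton s)
    have hset : {w : Fin (n+1) → ℝ | rnk v w = s}
        = (fun w => w ∘ σ) ⁻¹' {w | rnk 0 w = s} := by
      ext w
      simp only [Set.mem_setOf_eq, Set.mem_preimage]
      have : rnk 0 (w ∘ σ) = rnk v w := by
        have h0 : σ.symm v = 0 := by rw [← hσ0, Equiv.symm_apply_apply]
        rw [← h0]
        exact rnk_comp_perm σ w v
      rw [this]
    calc μ {ω | rnk v (vec ω) = s} = (μ.map vec) {w | rnk v w = s} := by
          rw [Measure.map_apply hvecmeas hAv]; rfl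
      _ = (μ.map vec) ((fun w => w ∘ σ) ⁻¹' {w | rnk 0 w = s}) := by rw [hset]
      _ = ((μ.map vec).map (fun w => w ∘ σ)) {w | rnk 0 w = s} := by
          rw [Measure.map_apply hcomp hA]
      _ = (μ.map (fun ω t => W (σ t) ω)) {w | rnk 0 w = s} := by
          rw [Measure.map_map hcomp hvecmeas]
          rfl
      _ = (μ.map vec) {w | rnk 0 w = s} := by rw [hperm σ]
      _ = μ {ω | rnk 0 (vec ω) = s} := by
          rw [Measure.map_apply hvecmeas hA]; rfl
  -- the injectivity event
  set D : Set Ω := {ω | Function.Injective (vec ω)} with hD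
  have hDmeas : MeasurableSet D := by
    have : D = ⋂ t, ⋂ t', {ω | W t ω = W t' ω → t = t'} := by
      ext ω
      simp only [hD, Set.mem_setOf_eq, Set.mem_iInter, Function.Injective]
      exact Iff.rfl
    rw [this]
    apply MeasurableSet.iInter; intro t
    apply MeasurableSet.iInter; intro t'
    by_cases htt : t = t'
    · have : {ω : Ω | W t ω = W t' ω → t = t'} = Set.univ := by
        ext ω; simp [htt]
      rw [this]; exact MeasurableSet.univ
    · have : {ω : Ω | W t ω = W t' ω → t = t'} = {ω | W t ω = W t' ω}ᶜ := by
        ext ω; simp [htt]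
      rw [this]
      exact (measurableSet_eq_fun (hWmeas t) (hWmeas t')).compl
  have hDc : μ Dᶜ = 0 := by
    have hsub : Dᶜ ⊆ ⋃ t, ⋃ t', {ω | t ≠ t' ∧ W t ω = W t' ω} := by
      intro ω hω
      simp only [hD, Set.mem_compl_iff, Set.mem_setOf_eq,
        Function.not_injective_iff] at hω
      obtain ⟨t, t', h1, h2⟩ := hω
      exact Set.mem_iUnion.mpr ⟨t, Set.mem_iUnion.mpr ⟨t', h2, h1⟩⟩
    refine measure_mono_null hsub ?_
    apply measure_iUnion_null; intro t
    apply measure_iUnion_null; intro t'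
    by_cases htt : t = t'
    · have : {ω : Ω | t ≠ t' ∧ W t ω = W t' ω} = ∅ := by ext ω; simp [htt]
      rw [this]; exact measure_empty
    · refine measure_mono_null (fun ω hω => hω.2) ?_
      exact measure_eq_zero_of_indep_atomless (hWmeas t) (hWmeas t')
        (hW.indepFun htt) (hlaw t) (hlaw t') hatom
  have hD1 : μ D = 1 := by
    have h1 : (1 : ℝ≥0∞) ≤ μ D + μ Dᶜ := by
      rw [← measure_univ (μ := μ)]
      exact (measure_mono (by simp)).trans (measure_union_le D Dᶜ)
    rw [hDc, add_zero] at h1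
    exact le_antisymm prob_le_one h1
  -- the partition argument
  set E : Fin (n+1) → Set Ω := fun v => {ω | rnk v (vec ω) = s} ∩ D with hE
  have hEmeas : ∀ v, MeasurableSet (E v) := by
    intro v
    exact ((measurable_rnk v (MeasurableSet.singleton s)).preimage hvecmeas).inter hDmeas
  have hEdisj : Pairwise (Function.onFun Disjoint E) := by
    intro u v huv
    rw [Function.onFun, Set.disjoint_left]
    rintro ω ⟨h1, h2⟩ ⟨h3, _⟩
    exact huv (rnk_injective h2 (h1.trans h3.symm))
  have hEunion : (⋃ v, E v) = D := by
    apply Set.Subset.antisymm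
    · exact Set.iUnion_subset fun v => Set.inter_subset_right
    · intro ω hω
      obtain ⟨v, hv, _⟩ := rnk_exists_unique hω s hs
      exact Set.mem_iUnion.mpr ⟨v, hv, hω⟩
  have hsum : ∑ v : Fin (n+1), μ (E v) = 1 := by
    rw [← tsum_fintype (L := SummationFilter.unconditional _), ← measure_iUnion hEdisj hEmeas, hEunion, hD1]
  have hEv : ∀ v, μ (E v) = μ {ω | rnk 0 (vec ω) = s} := by
    intro v
    rw [← hsame v]
    apply le_antisymm (measure_mono Set.inter_subset_left)
    calc μ {ω | rnk v (vec ω) = s}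
        ≤ μ (E v) + μ ({ω | rnk v (vec ω) = s} \ D) :=
          measure_le_inter_add_diff μ _ D
      _ ≤ μ (E v) + μ Dᶜ := by
          gcongr
          exact fun ω hω => hω.2
      _ = μ (E v) := by rw [hDc, add_zero]
  rw [Finset.sum_congr rfl (fun v _ => hEv v), Finset.sum_const] at hsum
  simp only [Finset.card_univ, Fintype.card_fin, nsmul_eq_mul, Nat.cast_add,
    Nat.cast_one] at hsum
  have hne0 : ((n : ℝ≥0∞) + 1) ≠ 0 := by simp
  have hnetop : ((n : ℝ≥0∞) + 1) ≠ ⊤ := by simp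
  have hkey : μ {ω | rnk 0 (fun t => W t ω) = s} = μ {ω | rnk 0 (vec ω) = s} := rfl
  rw [hkey]
  have h2 := congrArg (fun x => ((n : ℝ≥0∞) + 1)⁻¹ * x) hsum
  simpa [← mul_assoc, ENNReal.inv_mul_cancel hne0 hnetop] using h2

end RankUniform

section Count

lemma count_add_rnk {n : ℕ} {w : Fin (n+1) → ℝ} (hw : Function.Injective w) :
    (Finset.univ.filter fun u : Fin n => w 0 ≤ w u.succ).card + rnk 0 w = n := by
  classical
  set A : Finset (Fin (n+1)) := Finset.univ.filter fun t => t ≠ 0 ∧ w 0 ≤ w t with hA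
  set B : Finset (Fin (n+1)) := Finset.univ.filter fun t => w t < w 0 with hB
  have h1 : (Finset.univ.filter fun u : Fin n => w 0 ≤ w u.succ).card = A.card := by
    apply Finset.card_nbij (i := fun u => Fin.succ u)
    · intro u hu
      simp only [Finset.coe_filter, Set.mem_setOf_eq, hA, Finset.mem_univ, true_and,
        Finset.mem_coe, Finset.mem_filter] at *
      exact ⟨Fin.succ_ne_zero u, hu⟩
    · intro u _ v _ huv
      exact Fin.succ_injective n huv
    · intro t ht
      simp only [Finset.coe_filter, Set.mem_setOf_eq, hA, Finset.mem_univ, true_and,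
        Finset.mem_coe, Finset.mem_filter] at ht
      obtain ⟨u, hu⟩ := Fin.exists_succ_eq.mpr ht.1
      refine ⟨u, ?_, hu⟩
      simp only [Finset.coe_filter, Set.mem_setOf_eq, Finset.mem_univ, true_and, hu]
      exact ht.2
  have hdisj : Disjoint A B := by
    rw [Finset.disjoint_left]
    intro t htA htB
    simp only [hA, hB, Finset.mem_filter, Finset.mem_univ, true_and] at htA htB
    exact absurd (htA.2.trans_lt htB) (lt_irrefl _)
  have hunion : A ∪ B = Finset.univ.erase 0 := by
    ext t
    simp only [hA, hB, Finset.mem_union, Finset.mem_filter, Finset.mem_univ, true_and,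
      Finset.mem_erase]
    constructor
    · rintro (⟨h1, _⟩ | h2)
      · exact ⟨h1, trivial⟩
      · exact ⟨fun h => absurd (h ▸ h2) (lt_irrefl _), trivial⟩
    · rintro ⟨ht0, _⟩
      rcases le_or_gt (w 0) (w t) with h | h
      · exact Or.inl ⟨ht0, h⟩
      · exact Or.inr h
  have hcard : A.card + B.card = n := by
    rw [← Finset.card_union_of_disjoint hdisj, hunion,
      Finset.card_erase_of_mem (Finset.mem_univ 0)]
    simp
  rw [h1, rnk, ← hB]
  exact hcard

variable {Ω : Type*} [MeasurableSpace Ω] {μ : Measure Ω} [IsProbabilityMeasure μ]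

lemma count_uniform (n : ℕ) (W : Fin (n+1) → Ω → ℝ)
    (hWmeas : ∀ t, Measurable (W t))
    (hW : iIndepFun W μ) (ν : Measure ℝ)
    (hlaw : ∀ t, μ.map (W t) = ν) (hatom : ∀ r : ℝ, ν {r} = 0)
    (j : ℕ) (hj : j ≤ n) :
    μ {ω | (Finset.univ.filter fun u : Fin n => W 0 ω ≤ W u.succ ω).card ≤ j}
      = ((j : ℝ≥0∞) + 1) * ((n : ℝ≥0∞) + 1)⁻¹ := by
  set vec : Ω → (Fin (n+1) → ℝ) := fun ω t => W t ω with hvec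
  have hvecmeas : Measurable vec := measurable_pi_lambda _ hWmeas
  set D : Set Ω := {ω | Function.Injective (vec ω)} with hD
  have hDc : μ Dᶜ = 0 := by
    have hsub : Dᶜ ⊆ ⋃ t, ⋃ t', {ω | t ≠ t' ∧ W t ω = W t' ω} := by
      intro ω hω
      simp only [hD, Set.mem_compl_iff, Set.mem_setOf_eq,
        Function.not_injective_iff] at hω
      obtain ⟨t, t', h1, h2⟩ := hω
      exact Set.mem_iUnion.mpr ⟨t, Set.mem_iUnion.mpr ⟨t', h2, h1⟩⟩
    refine measure_mono_null hsub ?_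
    apply measure_iUnion_null; intro t
    apply measure_iUnion_null; intro t'
    by_cases htt : t = t'
    · have : {ω : Ω | t ≠ t' ∧ W t ω = W t' ω} = ∅ := by ext ω; simp [htt]
      rw [this]; exact measure_empty
    · refine measure_mono_null (fun ω hω => hω.2) ?_
      exact measure_eq_zero_of_indep_atomless (hWmeas t) (hWmeas t')
        (hW.indepFun htt) (hlaw t) (hlaw t') hatom
  have hmuD : ∀ S : Set Ω, μ S = μ (S ∩ D) := by
    intro S
    apply le_antisymm ?_ (measure_mono Set.inter_subset_left)
    calc μ S ≤ μ (S ∩ D) + μ (S \ D) := measure_le_inter_add_diff μ S D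
      _ ≤ μ (S ∩ D) + μ Dᶜ := by gcongr; exact fun ω hω => hω.2
      _ = μ (S ∩ D) := by rw [hDc, add_zero]
  set cnt : Ω → ℕ := fun ω =>
    (Finset.univ.filter fun u : Fin n => W 0 ω ≤ W u.succ ω).card with hcnt
  set U : Set Ω := ⋃ s ∈ Finset.Icc (n - j) n, {ω | rnk 0 (vec ω) = s} with hU
  have hinterD : {ω | cnt ω ≤ j} ∩ D = U ∩ D := by
    ext ω
    simp only [Set.mem_inter_iff, Set.mem_setOf_eq, hU, Set.mem_iUnion,
      Finset.mem_Icc, exists_prop]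
    constructor
    · rintro ⟨h1, h2⟩
      have hadd := count_add_rnk (n := n) (w := vec ω) h2
      have hle := rnk_le (n := n) 0 (vec ω)
      have hcc : cnt ω
          = (Finset.univ.filter fun u : Fin n => vec ω 0 ≤ vec ω u.succ).card := rfl
      exact ⟨⟨rnk 0 (vec ω), ⟨by omega, hle⟩, rfl⟩, h2⟩
    · rintro ⟨⟨s, ⟨hs1, _⟩, hs3⟩, h2⟩
      have hadd := count_add_rnk (n := n) (w := vec ω) h2
      have hcc : cnt ω
          = (Finset.univ.filter fun u : Fin n => vec ω 0 ≤ vec ω u.succ).card := rfl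
      exact ⟨by omega, h2⟩
  have step : μ {ω | cnt ω ≤ j} = μ U := by
    rw [hmuD {ω | cnt ω ≤ j}, hinterD, ← hmuD U]
  rw [step, hU]
  have hUdisj : Set.PairwiseDisjoint (↑(Finset.Icc (n - j) n))
      (fun s => {ω | rnk 0 (vec ω) = s}) := by
    intro s _ s' _ hss
    rw [Function.onFun, Set.disjoint_left]
    rintro ω h1 h2
    exact hss ((h1 : rnk 0 (vec ω) = s).symm.trans h2)
  rw [measure_biUnion_finset hUdisj
    (fun s _ => (measurable_rnk 0 (MeasurableSet.singleton s)).preimage hvecmeas)]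
  have heach : ∀ s ∈ Finset.Icc (n - j) n,
      μ {ω | rnk 0 (vec ω) = s} = ((n : ℝ≥0∞) + 1)⁻¹ := by
    intro s hs
    simp only [Finset.mem_Icc] at hs
    exact rank_uniform n W hWmeas hW ν hlaw hatom s hs.2
  rw [Finset.sum_congr rfl heach, Finset.sum_const]
  have hcard : (Finset.Icc (n - j) n).card = j + 1 := by
    rw [Nat.card_Icc]; omega
  rw [hcard, nsmul_eq_mul]
  push_cast
  ring

end Count

section Floor

lemma floor_bounds {m n ℓ k : ℕ} {α : ℝ} (hα0 : 0 < α) (hα1 : α ≤ 1) (hm : 0 < m)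
    (hℓ : 1 ≤ ℓ) (hcal : (n : ℝ) = (⌈(ℓ : ℝ) * m / α⌉ : ℝ) - 1)
    (hk1 : 1 ≤ k) (hk2 : k ≤ m) :
    (n : ℝ) * (α * k / m) ≤ (⌊(n : ℝ) * (α * k / m)⌋₊ : ℝ) + 1 ∧
      (⌊(n : ℝ) * (α * k / m)⌋₊ : ℝ) + 1 ≤ ((n : ℝ) + 1) * (α * k / m) := by
  have hmpos : (0 : ℝ) < m := by exact_mod_cast hm
  have hkpos : (0 : ℝ) < k := by exact_mod_cast hk1
  have hc : (0 : ℝ) < α * k / m := by positivity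
  set c : ℝ := α * k / m with hcdef
  have hnc_nonneg : (0 : ℝ) ≤ (n : ℝ) * c := by positivity
  constructor
  · exact (Nat.lt_floor_add_one ((n : ℝ) * c)).le
  · -- key: ⌊n c⌋ + 1 ≤ ℓ k ≤ (n+1) c
    have hn1 : (n : ℝ) + 1 = (⌈(ℓ : ℝ) * m / α⌉ : ℝ) := by rw [hcal]; ring
    have hup : (n : ℝ) < (ℓ : ℝ) * m / α := by
      have := Int.ceil_lt_add_one ((ℓ : ℝ) * m / α)
      rw [← hn1] at this
      linarith
    have hlo : (ℓ : ℝ) * m / α ≤ (n : ℝ) + 1 := by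
      rw [hn1]; exact Int.le_ceil _
    have hmulid : ((ℓ : ℝ) * m / α) * c = (ℓ : ℝ) * k := by
      rw [hcdef]; field_simp
    have h1 : (n : ℝ) * c < (ℓ : ℝ) * k := by
      rw [← hmulid]
      exact mul_lt_mul_of_pos_right hup hc
    have h2 : (ℓ : ℝ) * k ≤ ((n : ℝ) + 1) * c := by
      rw [← hmulid]
      exact mul_le_mul_of_nonneg_right hlo hc.le
    have h3 : (⌊(n : ℝ) * c⌋₊ : ℝ) < (ℓ : ℝ) * k :=
      lt_of_le_of_lt (Nat.floor_le hnc_nonneg) h1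
    have h4 : ⌊(n : ℝ) * c⌋₊ < ℓ * k := by exact_mod_cast h3
    have h5 : (⌊(n : ℝ) * c⌋₊ : ℝ) + 1 ≤ (ℓ : ℝ) * k := by
      have : ⌊(n : ℝ) * c⌋₊ + 1 ≤ ℓ * k := h4
      exact_mod_cast this
    linarith

end Floor

/-- with independent empirical p-values, own calibration sets of
cardinality `n = ⌈ℓ m / α⌉ - 1` for some integer `ℓ ≥ 1`, the FDR of BH at level `α`
satisfies `(n/(n+1)) * (m0 α / m) ≤ FDR ≤ m0 α / m`. -/
theorem bh_empirical_fdr_two_sided_bound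
    {Ω 𝒳 : Type*} [MeasurableSpace Ω] [MeasurableSpace 𝒳]
    (μ : Measure Ω) [IsProbabilityMeasure μ]
    (P0 : Measure 𝒳) [IsProbabilityMeasure P0]
    (m n m0 : ℕ) (hm : 0 < m) (hn : 0 < n)
    (H0 : Finset (Fin m)) (hcard : H0.card = m0)
    (a : 𝒳 → ℝ) (ha : Measurable a)
    (X : Fin m → Ω → 𝒳) (Z : Fin m → Fin n → Ω → 𝒳)
    (hXmeas : ∀ i, Measurable (X i)) (hZmeas : ∀ i j, Measurable (Z i j))
    (hindep : iIndepFun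
      (Sum.elim X (fun q : Fin m × Fin n => Z q.1 q.2) : Fin m ⊕ (Fin m × Fin n) → Ω → 𝒳) μ)
    (hXlaw : ∀ i ∈ H0, μ.map (X i) = P0)
    (hZlaw : ∀ i j, μ.map (Z i j) = P0)
    (hatomless : ∀ r : ℝ, P0 {x | a x = r} = 0)
    (α : ℝ) (hα : α ∈ Set.Ioc (0 : ℝ) 1)
    (hcal : ∃ ℓ : ℕ, 1 ≤ ℓ ∧ (n : ℝ) = (⌈(ℓ : ℝ) * m / α⌉ : ℝ) - 1) :
    ((n : ℝ) / (n + 1)) * (m0 * α / m)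
        ≤ ∫ ω, bhFDP m α H0 (fun j => empPval n a (X j ω) (fun u => Z j u ω)) ∂μ
      ∧ ∫ ω, bhFDP m α H0 (fun j => empPval n a (X j ω) (fun u => Z j u ω)) ∂μ
        ≤ m0 * α / m := by
  classical
  obtain ⟨hα0, hα1⟩ := hα
  obtain ⟨ℓ, hℓ1, hℓcal⟩ := hcal
  set ν : Measure ℝ := P0.map a with hν
  haveI hνprob : IsProbabilityMeasure ν := Measure.isProbabilityMeasure_map ha.aemeasurable
  have hνatom : ∀ r : ℝ, ν {r} = 0 := by
    intro r
    rw [hν, Measure.map_apply ha (measurableSet_singleton r)]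
    exact hatomless r
  set F : Fin m ⊕ (Fin m × Fin n) → Ω → 𝒳 :=
    (Sum.elim X (fun q : Fin m × Fin n => Z q.1 q.2)) with hF
  have hFmeas : ∀ s, Measurable (F s) := by
    rintro (j | ⟨j, u⟩)
    · exact hXmeas j
    · exact hZmeas j u
  set P : Ω → Fin m → ℝ := fun ω j => empPval n a (X j ω) (fun u => Z j u ω) with hP
  have hPnn : ∀ ω j, 0 ≤ P ω j := by
    intro ω j
    apply mul_nonneg (by positivity)
    apply Finset.sum_nonneg
    intro u _
    positivity
  have hPmeas : ∀ j, Measurable fun ω => P ω j := by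
    intro j
    apply Measurable.const_mul
    apply Finset.measurable_sum
    intro u _
    exact Measurable.ite
      (measurableSet_le (ha.comp (hXmeas j)) (ha.comp (hZmeas j u)))
      measurable_const measurable_const
  set c : ℕ → ℝ := fun k => α * k / m with hc
  set Q : Fin m → Ω → (Fin m → ℝ) := fun i ω => Function.update (P ω) i 0 with hQ
  have hQmeas : ∀ i, Measurable (Q i) := by
    intro i
    apply measurable_pi_lambda
    intro j
    have hrw : (fun ω => Q i ω j) = fun ω => if j = i then 0 else P ω j := by
      funext ω
      exact Function.update_apply (P ω) i 0 j
    rw [hrw]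
    by_cases hj : j = i
    · simp only [hj, if_true]
      exact measurable_const
    · simp only [hj, if_false]
      exact hPmeas j
  -- independence of the i-th p-value from the leave-one-out vector
  have hIndep : ∀ i : Fin m, IndepFun (fun ω => P ω i) (Q i) μ := by
    intro i
    set S : Finset (Fin m ⊕ Fin m × Fin n) :=
      insert (Sum.inl i) (Finset.univ.image fun u : Fin n => Sum.inr (i, u)) with hS
    have hS1 : (Sum.inl i : Fin m ⊕ Fin m × Fin n) ∈ S := Finset.mem_insert_self _ _
    have hS2 : ∀ u : Fin n, (Sum.inr (i, u) : Fin m ⊕ Fin m × Fin n) ∈ S := fun u =>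
      Finset.mem_insert_of_mem (Finset.mem_image_of_mem _ (Finset.mem_univ u))
    have hT1 : ∀ j : Fin m, ¬ j = i → (Sum.inl j : Fin m ⊕ Fin m × Fin n) ∈ Sᶜ := by
      intro j hj
      rw [Finset.mem_compl, hS]
      simp only [Finset.mem_insert, Finset.mem_image, Finset.mem_univ, true_and]
      push_neg
      refine ⟨by simp [hj], fun u => by simp⟩
    have hT2 : ∀ j : Fin m, ¬ j = i → ∀ u : Fin n,
        (Sum.inr (j, u) : Fin m ⊕ Fin m × Fin n) ∈ Sᶜ := by
      intro j hj u
      rw [Finset.mem_compl, hS]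
      simp only [Finset.mem_insert, Finset.mem_image, Finset.mem_univ, true_and]
      push_neg
      refine ⟨by simp, fun u' h => ?_⟩
      rw [Sum.inr.injEq, Prod.mk.injEq] at h
      exact hj h.1.symm
    set φ : ((s : S) → 𝒳) → ℝ := fun v =>
      (1 / (n : ℝ)) * ∑ u : Fin n,
        if a (v ⟨Sum.inl i, hS1⟩) ≤ a (v ⟨Sum.inr (i, u), hS2 u⟩) then (1 : ℝ) else 0
      with hφ
    have hφmeas : Measurable φ := by
      apply Measurable.const_mul
      apply Finset.measurable_sum
      intro u _
      exact Measurable.ite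
        (measurableSet_le (ha.comp (measurable_pi_apply _))
          (ha.comp (measurable_pi_apply _)))
        measurable_const measurable_const
    set ψ : ((t : (Sᶜ : Finset (Fin m ⊕ Fin m × Fin n))) → 𝒳) → (Fin m → ℝ) := fun v j =>
      if hj : j = i then 0 else
        (1 / (n : ℝ)) * ∑ u : Fin n,
          if a (v ⟨Sum.inl j, hT1 j hj⟩) ≤ a (v ⟨Sum.inr (j, u), hT2 j hj u⟩)
            then (1 : ℝ) else 0
      with hψ
    have hψmeas : Measurable ψ := by
      apply measurable_pi_lambda
      intro j
      by_cases hj : j = i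
      · simp only [hψ, dif_pos hj]
        exact measurable_const
      · simp only [hψ, dif_neg hj]
        apply Measurable.const_mul
        apply Finset.measurable_sum
        intro u _
        exact Measurable.ite
          (measurableSet_le (ha.comp (measurable_pi_apply _))
            (ha.comp (measurable_pi_apply _)))
          measurable_const measurable_const
    have key : IndepFun (fun ω (s : S) => F s ω)
        (fun ω (t : (Sᶜ : Finset (Fin m ⊕ Fin m × Fin n))) => F t ω) μ :=
      hindep.indepFun_finset S Sᶜ disjoint_compl_right hFmeas
    have hfeq : (fun ω => P ω i) = φ ∘ (fun ω (s : S) => F s ω) := by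
      funext ω
      rfl
    have hgeq : Q i = ψ ∘ (fun ω (t : (Sᶜ : Finset (Fin m ⊕ Fin m × Fin n))) => F t ω) := by
      funext ω j
      have hrw : Q i ω j = if j = i then 0 else P ω j :=
        Function.update_apply (P ω) i 0 j
      rw [hrw]
      by_cases hj : j = i
      · simp only [hj, if_true, Function.comp_apply, hψ, dif_pos]
      · simp only [hj, if_false, Function.comp_apply, hψ, dif_neg]
        rfl
    rw [hfeq, hgeq]
    exact key.comp hφmeas hψmeas
  -- distribution of the i-th empirical p-value for nulls
  have hlawA : ∀ i ∈ H0, ∀ k : ℕ, k ≤ m →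
      μ {ω | P ω i ≤ c k}
        = ((⌊(n : ℝ) * c k⌋₊ : ℝ≥0∞) + 1) * ((n : ℝ≥0∞) + 1)⁻¹ := by
    intro i hi k hk
    set e : Fin (n+1) → (Fin m ⊕ Fin m × Fin n) :=
      Fin.cases (Sum.inl i) (fun u => Sum.inr (i, u)) with he
    have he0 : e 0 = Sum.inl i := by simp [he]
    have hesucc : ∀ u : Fin n, e u.succ = Sum.inr (i, u) := fun u => by simp [he]
    have heinj : Function.Injective e := by
      intro t t' htt
      induction t using Fin.cases with
      | zero =>
        induction t' using Fin.cases with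
        | zero => rfl
        | succ u => rw [he0, hesucc] at htt; exact absurd htt (by simp)
      | succ u =>
        induction t' using Fin.cases with
        | zero => rw [he0, hesucc] at htt; exact absurd htt (by simp)
        | succ u' =>
          rw [hesucc, hesucc] at htt
          have huu : u = u' := by simpa using htt
          rw [huu]
    set W : Fin (n+1) → Ω → ℝ := fun t ω => a (F (e t) ω) with hW
    have hWmeas : ∀ t, Measurable (W t) := fun t => ha.comp (hFmeas _)
    have hWindep : iIndepFun W μ :=
      (iIndepFun_reindex hindep e heinj).comp (fun _ => a) (fun _ => ha)
    have hWlaw : ∀ t, μ.map (W t) = ν := by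
      intro t
      induction t using Fin.cases with
      | zero =>
        calc μ.map (W 0) = μ.map (a ∘ X i) := rfl
          _ = (μ.map (X i)).map a := (Measure.map_map ha (hXmeas i)).symm
          _ = ν := by rw [hXlaw i hi, hν]
      | succ u =>
        calc μ.map (W u.succ) = μ.map (a ∘ Z i u) := by
              congr 1
          _ = (μ.map (Z i u)).map a := (Measure.map_map ha (hZmeas i u)).symm
          _ = ν := by rw [hZlaw i u, hν]
    have hnpos : (0 : ℝ) < n := by exact_mod_cast hn
    have hck0 : 0 ≤ c k := by rw [hc]; positivity
    have hnck0 : (0 : ℝ) ≤ (n : ℝ) * c k := by positivity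
    have hck1 : c k ≤ 1 := by
      rw [hc, div_le_one (by exact_mod_cast hm)]
      calc α * k ≤ 1 * k := by gcongr
        _ = k := one_mul _
        _ ≤ m := by exact_mod_cast hk
    have hjn : ⌊(n : ℝ) * c k⌋₊ ≤ n := by
      have hle : (n : ℝ) * c k ≤ (n : ℝ) := by nlinarith
      calc ⌊(n : ℝ) * c k⌋₊ ≤ ⌊(n : ℝ)⌋₊ := Nat.floor_mono hle
        _ = n := Nat.floor_natCast n
    have hcount := count_uniform n W hWmeas hWindep ν hWlaw hνatom
      ⌊(n : ℝ) * c k⌋₊ hjn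
    have hsetEq : {ω | P ω i ≤ c k}
        = {ω | (Finset.univ.filter fun u : Fin n => W 0 ω ≤ W u.succ ω).card
            ≤ ⌊(n : ℝ) * c k⌋₊} := by
      ext ω
      simp only [Set.mem_setOf_eq]
      have hPform : P ω i = (1 / (n : ℝ)) *
          ((Finset.univ.filter fun u : Fin n => W 0 ω ≤ W u.succ ω).card : ℝ) := by
        have hstart : P ω i = (1 / (n : ℝ)) *
            ∑ u : Fin n, if a (X i ω) ≤ a (Z i u ω) then (1 : ℝ) else 0 := rfl
        rw [hstart]
        congr 1
        rw [Finset.card_filter]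
        push_cast
        apply Finset.sum_congr rfl
        intro u _
        have h1 : W 0 ω = a (X i ω) := by rw [hW]; simp only [he0]; rfl
        have h2 : W u.succ ω = a (Z i u ω) := by rw [hW]; simp only [hesucc u]; rfl
        rw [h1, h2]
      rw [hPform, one_div, inv_mul_le_iff₀ hnpos]
      constructor
      · intro h
        exact Nat.le_floor h
      · intro h
        exact le_trans (by exact_mod_cast Nat.cast_le.mpr h) (Nat.floor_le hnck0)
    rw [hsetEq]
    exact hcount
  -- the leave-one-out rejection counts partition the space
  have hBmeas : ∀ (i : Fin m) (k : ℕ), MeasurableSet {ω | bhR m α (Q i ω) = k} :=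
    fun i k => (measurable_bhR.comp (hQmeas i)) (MeasurableSet.singleton k)
  have hBpart : ∀ i : Fin m,
      ∑ k ∈ Finset.Icc 1 m, μ {ω | bhR m α (Q i ω) = k} = 1 := by
    intro i
    have hdisj : Set.PairwiseDisjoint ↑(Finset.Icc 1 m)
        (fun k => {ω | bhR m α (Q i ω) = k}) := by
      intro k _ k' _ hkk
      rw [Function.onFun, Set.disjoint_left]
      rintro ω h1 h2
      exact hkk ((h1 : bhR m α (Q i ω) = k).symm.trans h2)
    rw [← measure_biUnion_finset hdisj (fun k _ => hBmeas i k)]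
    have huniv : (⋃ k ∈ Finset.Icc 1 m, {ω | bhR m α (Q i ω) = k}) = Set.univ := by
      ext ω
      simp only [Set.mem_iUnion, Set.mem_setOf_eq, Finset.mem_Icc, exists_prop,
        Set.mem_univ, iff_true]
      refine ⟨bhR m α (Q i ω), ⟨?_, ?_⟩, rfl⟩
      · rw [bhR_eq_bhM m α hm hα0]
        exact one_le_bhM_update hm hα0 (P ω) i
      · rw [bhR_eq_bhM m α hm hα0]
        exact bhM_le m α _
    rw [huniv, measure_univ]
  -- the integral decomposition
  set AB : Fin m → ℕ → Set Ω :=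
    fun i k => {ω | P ω i ≤ c k ∧ bhR m α (Q i ω) = k} with hAB
  have hABmeas : ∀ i k, MeasurableSet (AB i k) := by
    intro i k
    exact (measurableSet_le (hPmeas i) measurable_const).inter
      ((measurable_bhR.comp (hQmeas i)) (MeasurableSet.singleton k))
  have hABsplit : ∀ i k, μ (AB i k)
      = μ {ω | P ω i ≤ c k} * μ {ω | bhR m α (Q i ω) = k} := by
    intro i k
    have h := (hIndep i).measure_inter_preimage_eq_mul
      (Set.Iic (c k)) {p : Fin m → ℝ | bhR m α p = k}
      measurableSet_Iic (measurable_bhR (MeasurableSet.singleton k))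
    exact h
  have hintegrand : ∀ ω, bhFDP m α H0 (P ω) = ∑ i ∈ H0, ∑ k ∈ Finset.Icc 1 m,
      Set.indicator (AB i k) (fun _ => ((k : ℝ))⁻¹) ω := by
    intro ω
    rw [fdp_decomp hm hα0 (P ω) H0 (fun j => hPnn ω j)]
    apply Finset.sum_congr rfl
    intro i _
    apply Finset.sum_congr rfl
    intro k _
    rw [Set.indicator_apply]
    rfl
  have hint : ∫ ω, bhFDP m α H0 (P ω) ∂μ
      = ∑ i ∈ H0, ∑ k ∈ Finset.Icc 1 m, (μ (AB i k)).toReal * ((k : ℝ))⁻¹ := by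
    rw [show (fun ω => bhFDP m α H0 (P ω)) = fun ω => ∑ i ∈ H0, ∑ k ∈ Finset.Icc 1 m,
      Set.indicator (AB i k) (fun _ => ((k : ℝ))⁻¹) ω from funext hintegrand]
    rw [integral_finset_sum H0 (fun i _ => integrable_finset_sum _
      (fun k _ => (integrable_const _).indicator (hABmeas i k)))]
    apply Finset.sum_congr rfl
    intro i _
    rw [integral_finset_sum _ (fun k _ => (integrable_const _).indicator (hABmeas i k))]
    apply Finset.sum_congr rfl
    intro k _
    rw [integral_indicator_const _ (hABmeas i k), smul_eq_mul]
    rfl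
  -- term-wise bounds
  have hterm : ∀ i ∈ H0, ∀ k ∈ Finset.Icc 1 m,
      (((n : ℝ) / ((n : ℝ) + 1)) * (α / m)) * (μ {ω | bhR m α (Q i ω) = k}).toReal
        ≤ (μ (AB i k)).toReal * ((k : ℝ))⁻¹ ∧
      (μ (AB i k)).toReal * ((k : ℝ))⁻¹
        ≤ (α / m) * (μ {ω | bhR m α (Q i ω) = k}).toReal := by
    intro i hi k hk
    rw [Finset.mem_Icc] at hk
    have hkpos : (0 : ℝ) < k := by exact_mod_cast hk.1
    have hn1pos : (0 : ℝ) < (n : ℝ) + 1 := by positivity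
    have hmpos : (0 : ℝ) < m := by exact_mod_cast hm
    have hb0 : (0 : ℝ) ≤ (μ {ω | bhR m α (Q i ω) = k}).toReal := ENNReal.toReal_nonneg
    have hsplit : (μ (AB i k)).toReal * ((k : ℝ))⁻¹
        = ((((⌊(n : ℝ) * c k⌋₊ : ℝ) + 1) / ((n : ℝ) + 1)) * ((k : ℝ))⁻¹)
          * (μ {ω | bhR m α (Q i ω) = k}).toReal := by
      rw [hABsplit i k, hlawA i hi k hk.2, ENNReal.toReal_mul, ENNReal.toReal_mul,
        ENNReal.toReal_inv,
        ENNReal.toReal_add (ENNReal.natCast_ne_top _) ENNReal.one_ne_top,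
        ENNReal.toReal_add (ENNReal.natCast_ne_top _) ENNReal.one_ne_top,
        ENNReal.toReal_natCast, ENNReal.toReal_natCast, ENNReal.toReal_one, div_eq_mul_inv]
      ring
    obtain ⟨hf1, hf2⟩ := floor_bounds (m := m) (n := n) (ℓ := ℓ) (k := k)
      hα0 hα1 hm hℓ1 hℓcal hk.1 hk.2
    have hck : (α * (k : ℝ) / m) = c k := rfl
    rw [hck] at hf1 hf2
    rw [hsplit]
    have hck0 : 0 ≤ c k := by rw [← hck]; positivity
    constructor
    · apply mul_le_mul_of_nonneg_right ?_ hb0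
      have key : (n : ℝ) / ((n : ℝ) + 1) * (α / m)
          = ((n : ℝ) * c k) / ((n : ℝ) + 1) * ((k : ℝ))⁻¹ := by
        rw [← hck]
        field_simp
      rw [key]
      apply mul_le_mul_of_nonneg_right ?_ (by positivity)
      gcongr
    · apply mul_le_mul_of_nonneg_right ?_ hb0
      have key : (α / m) = (((n : ℝ) + 1) * c k) / ((n : ℝ) + 1) * ((k : ℝ))⁻¹ := by
        rw [← hck]
        field_simp
      rw [key]
      apply mul_le_mul_of_nonneg_right ?_ (by positivity)
      gcongr
  -- summing over k
  have hsum_b : ∀ i : Fin m,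
      ∑ k ∈ Finset.Icc 1 m, (μ {ω | bhR m α (Q i ω) = k}).toReal = 1 := by
    intro i
    rw [← ENNReal.toReal_sum (fun k _ => measure_ne_top μ _), hBpart i, ENNReal.toReal_one]
  have hlower : ∀ i ∈ H0, ((n : ℝ) / ((n : ℝ) + 1)) * (α / m)
      ≤ ∑ k ∈ Finset.Icc 1 m, (μ (AB i k)).toReal * ((k : ℝ))⁻¹ := by
    intro i hi
    calc ((n : ℝ) / ((n : ℝ) + 1)) * (α / m)
        = ∑ k ∈ Finset.Icc 1 m, (((n : ℝ) / ((n : ℝ) + 1)) * (α / m))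
            * (μ {ω | bhR m α (Q i ω) = k}).toReal := by
          rw [← Finset.mul_sum, hsum_b i, mul_one]
      _ ≤ _ := Finset.sum_le_sum (fun k hk => (hterm i hi k hk).1)
  have hupper : ∀ i ∈ H0, (∑ k ∈ Finset.Icc 1 m, (μ (AB i k)).toReal * ((k : ℝ))⁻¹)
      ≤ α / m := by
    intro i hi
    calc (∑ k ∈ Finset.Icc 1 m, (μ (AB i k)).toReal * ((k : ℝ))⁻¹)
        ≤ ∑ k ∈ Finset.Icc 1 m, (α / m) * (μ {ω | bhR m α (Q i ω) = k}).toReal :=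
          Finset.sum_le_sum (fun k hk => (hterm i hi k hk).2)
      _ = α / m := by rw [← Finset.mul_sum, hsum_b i, mul_one]
  have hIeq : ∫ ω, bhFDP m α H0 (fun j => empPval n a (X j ω) (fun u => Z j u ω)) ∂μ
      = ∑ i ∈ H0, ∑ k ∈ Finset.Icc 1 m, (μ (AB i k)).toReal * ((k : ℝ))⁻¹ := hint
  rw [hIeq]
  constructor
  · calc ((n : ℝ) / ((n : ℝ) + 1)) * ((m0 : ℝ) * α / m)
        = ∑ _i ∈ H0, ((n : ℝ) / ((n : ℝ) + 1)) * (α / m) := by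
          rw [Finset.sum_const, hcard, nsmul_eq_mul]
          ring
      _ ≤ _ := Finset.sum_le_sum hlower
  · calc (∑ i ∈ H0, ∑ k ∈ Finset.Icc 1 m, (μ (AB i k)).toReal * ((k : ℝ))⁻¹)
        ≤ ∑ _i ∈ H0, α / m := Finset.sum_le_sum hupper
      _ = (m0 : ℝ) * α / m := by
          rw [Finset.sum_const, hcard, nsmul_eq_mul]
          ring
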